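/- Let φ : ℝ³ → ℝ be 1-Lipschitz, let δ > 0, let p₁, p₂ ∈ ℝ³ and let θ₁, θ₂ ∈ ℝ³ be unit vectors such that for i = 1, 2 one has φ(pᵢ + δ·θᵢ) = φ(pᵢ) + δ and φ(pᵢ − δ·θᵢ) = φ(pᵢ) − δ. Then δ²·‖θ₁ − θ₂‖² ≤ ‖p₁ − p₂‖² − (φ(p₁) − φ(p₂))². -/
import Mathlib


open scoped RealInnerProductSpace

local notation "ℝ³" => EuclideanSpace ℝ (Fin 3)

theorem stmt_0 (φ : ℝ³ → ℝ) (hφ : ∀ x y : ℝ³, |φ x - φ y| ≤ ‖x - y‖)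
    (δ : ℝ) (hδ : 0 < δ) (p₁ p₂ θ₁ θ₂ : ℝ³)
    (hθ₁ : ‖θ₁‖ = 1) (hθ₂ : ‖θ₂‖ = 1)
    (h1p : φ (p₁ + δ • θ₁) = φ p₁ + δ) (h1m : φ (p₁ - δ • θ₁) = φ p₁ - δ)
    (h2p : φ (p₂ + δ • θ₂) = φ p₂ + δ) (h2m : φ (p₂ - δ • θ₂) = φ p₂ - δ) :
    δ ^ 2 * ‖θ₁ - θ₂‖ ^ 2 ≤ ‖p₁ - p₂‖ ^ 2 - (φ p₁ - φ p₂) ^ 2 := by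
  have h1 := hφ (p₁ + δ • θ₁) (p₂ - δ • θ₂)
  have h2 := hφ (p₁ - δ • θ₁) (p₂ + δ • θ₂)
  rw [h1p, h2m] at h1
  rw [h1m, h2p] at h2
  have s1 : (φ p₁ + δ - (φ p₂ - δ)) ^ 2 ≤ ‖(p₁ + δ • θ₁) - (p₂ - δ • θ₂)‖ ^ 2 := by
    calc (φ p₁ + δ - (φ p₂ - δ)) ^ 2 = |φ p₁ + δ - (φ p₂ - δ)| ^ 2 := (sq_abs _).symm
    _ ≤ _ := pow_le_pow_left₀ (abs_nonneg _) h1 2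
  have s2 : (φ p₁ - δ - (φ p₂ + δ)) ^ 2 ≤ ‖(p₁ - δ • θ₁) - (p₂ + δ • θ₂)‖ ^ 2 := by
    calc (φ p₁ - δ - (φ p₂ + δ)) ^ 2 = |φ p₁ - δ - (φ p₂ + δ)| ^ 2 := (sq_abs _).symm
    _ ≤ _ := pow_le_pow_left₀ (abs_nonneg _) h2 2
  have e1 : ‖(p₁ + δ • θ₁) - (p₂ - δ • θ₂)‖ ^ 2
      = ‖p₁ - p₂‖ ^ 2 + 2 * ⟪p₁ - p₂, δ • θ₁ + δ • θ₂⟫ + ‖δ • θ₁ + δ • θ₂‖ ^ 2 := by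
    rw [show (p₁ + δ • θ₁) - (p₂ - δ • θ₂) = (p₁ - p₂) + (δ • θ₁ + δ • θ₂) by abel]
    exact norm_add_sq_real _ _
  have e2 : ‖(p₁ - δ • θ₁) - (p₂ + δ • θ₂)‖ ^ 2
      = ‖p₁ - p₂‖ ^ 2 - 2 * ⟪p₁ - p₂, δ • θ₁ + δ • θ₂⟫ + ‖δ • θ₁ + δ • θ₂‖ ^ 2 := by
    rw [show (p₁ - δ • θ₁) - (p₂ + δ • θ₂) = (p₁ - p₂) - (δ • θ₁ + δ • θ₂) by abel]
    exact norm_sub_sq_real _ _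
  have e3 : ‖δ • θ₁ + δ • θ₂‖ ^ 2 = 2 * δ ^ 2 + 2 * δ ^ 2 * ⟪θ₁, θ₂⟫ := by
    rw [norm_add_sq_real, norm_smul, norm_smul, real_inner_smul_left, real_inner_smul_right,
      hθ₁, hθ₂]
    simp [Real.norm_eq_abs, abs_of_pos hδ]
    ring
  have e4 : ‖θ₁ - θ₂‖ ^ 2 = 2 - 2 * ⟪θ₁, θ₂⟫ := by
    rw [norm_sub_sq_real, hθ₁, hθ₂]; ring
  nlinarith [s1, s2, e1, e2, e3, e4]
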